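/- Let g = (α c + δ_M)** depend on α > 0, with c : ℝᵐ → ℝ non-negative, strictly convex and lower semi-continuous, and M ⊂ ℝᵐ finite. For z ∈ Y let M₀ := inf_{u∈U} ‖S(u) − z‖_Y and O := {u ∈ U : ‖S(u) − z‖_Y = M₀}. If S : U → Y is weak-to-weak continuous, then with respect to weak convergence in U, the functionals (1/α)(E^z − M₀²/2) Γ-converge as α → 0 to δ_O + G₁, where G₁(u) = ∫_Ω g₁**(u(x)) dx for g₁ = c + δ_M and δ_O is the indicator functional of O. -/

import Mathlib

open MeasureTheory Set Filter Topology
open scoped ENNReal NNReal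

noncomputable section

abbrev Vec (k : ℕ) := EuclideanSpace ℝ (Fin k)

/-- Weak convergence of a sequence in a real inner product space. -/
def WeakTendsto {X : Type*} [NormedAddCommGroup X] [InnerProductSpace ℝ X]
    (u : ℕ → X) (l : X) : Prop :=
  ∀ w : X, Tendsto (fun i => (inner ℝ (u i) w : ℝ)) atTop (nhds (inner ℝ l w : ℝ))

/-- Convexity for extended-real-valued functions. -/
def EConvexOn {X : Type*} [AddCommGroup X] [Module ℝ X] (g : X → EReal) : Prop :=
  ∀ x y : X, ∀ a b : ℝ, 0 ≤ a → 0 ≤ b → a + b = 1 →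
    g (a • x + b • y) ≤ (a : EReal) * g x + (b : EReal) * g y

/-- Properness for extended-real-valued functions. -/
def EProper {X : Type*} (g : X → EReal) : Prop :=
  (∃ v, g v ≠ ⊤) ∧ ∀ v, g v ≠ ⊥

open Classical in
/-- The integral functional `u ↦ ∫ g(u x) dμ`, valued in `EReal`. -/
def intG {α : Type*} [MeasurableSpace α] (μ : Measure α) {k : ℕ} (g : Vec k → EReal)
    (u : α → Vec k) : EReal :=
  if (∀ᵐ x ∂μ, g (u x) ≠ ⊤) ∧ Integrable (fun x => (g (u x)).toReal) μ
  then (((∫ x, (g (u x)).toReal ∂μ : ℝ) : EReal)) else ⊤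

/-- The Tikhonov-type energy `u ↦ ½‖S u − z‖² + ∫ g(u x) dμ`. -/
def energy {α : Type*} [MeasurableSpace α] (μ : Measure α) {k : ℕ} {Y : Type*}
    [NormedAddCommGroup Y]
    (S : Lp (Vec k) 2 μ → Y) (z : Y) (g : Vec k → EReal) (u : Lp (Vec k) 2 μ) : EReal :=
  (((1/2 : ℝ) * ‖S u - z‖^2 : ℝ) : EReal) + intG μ g (fun x => u x)

/-- The convex subdifferential of an extended-real-valued function on a real inner
product space. -/
def ESubdiff {X : Type*} [NormedAddCommGroup X] [InnerProductSpace ℝ X]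
    (f : X → EReal) (u : X) : Set X :=
  {p | ∀ v, f u + ((inner ℝ p (v - u) : ℝ) : EReal) ≤ f v}

/-- The Fenchel (Legendre–Fenchel) conjugate of an extended-real-valued function on a
real inner product space. -/
def EConj {X : Type*} [NormedAddCommGroup X] [InnerProductSpace ℝ X]
    (f : X → EReal) (p : X) : EReal :=
  ⨆ v, ((inner ℝ p v : ℝ) : EReal) - f v

namespace GammaAux

/-- Truncation of an `EReal` to `ℝ≥0∞`. -/
def eNN (x : EReal) : ℝ≥0∞ := if x = ⊤ then ⊤ else ENNReal.ofReal x.toReal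

lemma eNN_top : eNN ⊤ = ⊤ := if_pos rfl

lemma eNN_coe (r : ℝ) : eNN (r : EReal) = ENNReal.ofReal r := by
  rw [eNN, if_neg (EReal.coe_ne_top r), EReal.toReal_coe]

lemma eNN_mono : Monotone eNN := by
  intro x y hxy
  rcases eq_or_ne y ⊤ with hy | hy
  · simp [eNN, hy]
  · have hx : x ≠ ⊤ := fun h => hy (top_le_iff.mp (h ▸ hxy))
    rcases eq_or_ne x ⊥ with hb | hb
    · simp [eNN, hb, hx, hy]
    · rw [eNN, if_neg hx, eNN, if_neg hy]
      exact ENNReal.ofReal_le_ofReal (EReal.toReal_le_toReal hxy hb hy)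

lemma eNN_eq_top_iff {x : EReal} : eNN x = ⊤ ↔ x = ⊤ := by
  constructor
  · intro h
    by_contra hx
    rw [eNN, if_neg hx] at h
    exact ENNReal.ofReal_ne_top h
  · intro h; simp [h, eNN_top]

lemma measurable_eNN : Measurable eNN := by
  have h : MeasurableSet {x : EReal | x = ⊤} := by
    have : {x : EReal | x = ⊤} = {⊤} := by ext x; simp
    rw [this]; exact measurableSet_singleton _
  exact Measurable.ite h measurable_const (ENNReal.measurable_ofReal.comp measurable_ereal_toReal)

lemma exists_real_lt {x : EReal} {c : ℝ≥0∞} (hc : c < eNN x) :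
    ∃ y : ℝ, (y : EReal) < x ∧ c < ENNReal.ofReal y := by
  induction x using EReal.rec with
  | bot => simp [eNN, EReal.toReal_bot] at hc
  | coe r =>
    rw [eNN_coe] at hc
    have hct : c ≠ ⊤ := hc.ne_top
    have h1 : c.toReal < r := (ENNReal.lt_ofReal_iff_toReal_lt hct).mp hc
    obtain ⟨y, hy1, hy2⟩ := exists_between h1
    exact ⟨y, EReal.coe_lt_coe_iff.mpr hy2, (ENNReal.lt_ofReal_iff_toReal_lt hct).mpr hy1⟩
  | top =>
    refine ⟨c.toReal + 1, EReal.coe_lt_top _, ?_⟩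
    have hct : c ≠ ⊤ := hc.ne_top
    conv_lhs => rw [← ENNReal.ofReal_toReal hct]
    rw [ENNReal.ofReal_lt_ofReal_iff (by positivity)]
    linarith

lemma eNN_le_liminf {k : ℕ} {g : Vec k → EReal} (hg : LowerSemicontinuous g)
    {w : ℕ → Vec k} {x : Vec k} (hw : Tendsto w atTop (𝓝 x)) :
    eNN (g x) ≤ atTop.liminf fun j => eNN (g (w j)) := by
  refine (le_liminf_iff (by isBoundedDefault) (by isBoundedDefault)).mpr fun c hc => ?_
  obtain ⟨y, hy1, hy2⟩ := exists_real_lt hc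
  filter_upwards [hw.eventually (hg x _ hy1)] with j hj
  calc c < ENNReal.ofReal y := hy2
  _ = eNN (y : EReal) := (eNN_coe y).symm
  _ ≤ eNN (g (w j)) := eNN_mono hj.le

lemma eNN_combo {X Y : EReal} (hX : 0 ≤ X) (hY : 0 ≤ Y) {a b : ℝ}
    (ha : 0 ≤ a) (hb : 0 ≤ b) (hab : a + b = 1) :
    eNN ((a : EReal) * X + (b : EReal) * Y) ≤
      ENNReal.ofReal a * eNN X + ENNReal.ofReal b * eNN Y := by
  rcases ha.eq_or_lt with rfl | ha'
  · have hb1 : b = 1 := by linarith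
    subst hb1; simp
  rcases hb.eq_or_lt with rfl | hb'
  · have ha1 : a = 1 := by linarith
    subst ha1; simp
  have hXb : X ≠ ⊥ := fun h => by simp [h] at hX
  have hYb : Y ≠ ⊥ := fun h => by simp [h] at hY
  rcases eq_or_ne X ⊤ with rfl | hXt
  · rw [EReal.coe_mul_top_of_pos ha', EReal.top_add_of_ne_bot, eNN_top,
      ENNReal.mul_top (ENNReal.ofReal_pos.mpr ha').ne']
    · exact le_self_add
    · intro h
      have h0 : (0 : EReal) ≤ (b : EReal) * Y := by
        apply mul_nonneg _ hY
        exact_mod_cast hb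
      simp [h] at h0
  rcases eq_or_ne Y ⊤ with rfl | hYt
  · rw [EReal.coe_mul_top_of_pos hb', EReal.add_top_of_ne_bot, eNN_top]
    · rw [show ENNReal.ofReal b * ⊤ = ⊤ from ENNReal.mul_top (ENNReal.ofReal_pos.mpr hb').ne']
      exact le_add_self
    · intro h
      have h0 : (0 : EReal) ≤ (a : EReal) * X := by
        apply mul_nonneg _ hX
        exact_mod_cast ha
      simp [h] at h0
  lift X to ℝ using ⟨hXt, hXb⟩
  lift Y to ℝ using ⟨hYt, hYb⟩
  have hX' : (0:ℝ) ≤ X := by exact_mod_cast hX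
  have hY' : (0:ℝ) ≤ Y := by exact_mod_cast hY
  rw [← EReal.coe_mul, ← EReal.coe_mul, ← EReal.coe_add, eNN_coe, eNN_coe, eNN_coe,
    ENNReal.ofReal_add (by positivity) (by positivity), ENNReal.ofReal_mul ha,
    ENNReal.ofReal_mul hb]

section MeasureLayer

variable {α : Type*} [MeasurableSpace α] {μ : Measure α} {k : ℕ}

/-- The `ℝ≥0∞`-valued integral functional. -/
def Phi (μ : Measure α) (g : Vec k → EReal) (u : α → Vec k) : ℝ≥0∞ :=
  ∫⁻ x, eNN (g (u x)) ∂μ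

lemma toReal_nonneg' : ∀ {x : EReal}, 0 ≤ x → 0 ≤ x.toReal
  | ⊥, h => by simp at h
  | ⊤, _ => le_of_eq EReal.toReal_top.symm
  | (r : ℝ), h => by simpa using (EReal.coe_le_coe_iff.mp (by simpa using h))

lemma intG_ne_bot (g : Vec k → EReal) (u : α → Vec k) : intG μ g u ≠ ⊥ := by
  rw [intG]
  split
  · exact EReal.coe_ne_bot _
  · simp

lemma intG_nonneg {g : Vec k → EReal} (hg0 : ∀ v, 0 ≤ g v) (u : α → Vec k) :
    0 ≤ intG μ g u := by
  rw [intG]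
  split
  · exact_mod_cast integral_nonneg fun x => toReal_nonneg' (hg0 _)
  · exact le_top

lemma intG_eq_phi {g : Vec k → EReal} (hg0 : ∀ v, 0 ≤ g v) (hgm : Measurable g)
    {u : α → Vec k} (hu : AEMeasurable u μ) :
    intG μ g u = ((Phi μ g u : ℝ≥0∞) : EReal) := by
  have hmeas : AEMeasurable (fun x => eNN (g (u x))) μ :=
    (measurable_eNN.comp hgm).comp_aemeasurable hu
  by_cases hcond : (∀ᵐ x ∂μ, g (u x) ≠ ⊤) ∧ Integrable (fun x => (g (u x)).toReal) μ
  · obtain ⟨hae, hint⟩ := hcond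
    have h1 : ∀ᵐ x ∂μ, eNN (g (u x)) = ENNReal.ofReal ((g (u x)).toReal) := by
      filter_upwards [hae] with x hx; rw [eNN, if_neg hx]
    have h2 : Phi μ g u = ENNReal.ofReal (∫ x, (g (u x)).toReal ∂μ) := by
      rw [Phi, lintegral_congr_ae h1]
      exact (ofReal_integral_eq_lintegral_ofReal hint
        (Eventually.of_forall fun x => toReal_nonneg' (hg0 _))).symm
    rw [intG, if_pos ⟨hae, hint⟩, h2, EReal.coe_ennreal_ofReal,
      max_eq_left (integral_nonneg fun x => toReal_nonneg' (hg0 _))]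
  · have hPhi : Phi μ g u = ⊤ := by
      by_contra hP
      apply hcond
      have hae : ∀ᵐ x ∂μ, g (u x) ≠ ⊤ := by
        filter_upwards [ae_lt_top' hmeas hP] with x hx
        intro h
        rw [h, eNN_top] at hx
        exact absurd hx (lt_irrefl _)
      refine ⟨hae, ?_⟩
      have hint := integrable_toReal_of_lintegral_ne_top hmeas hP
      refine hint.congr ?_
      filter_upwards [hae] with x hx
      rw [eNN, if_neg hx, ENNReal.toReal_ofReal (toReal_nonneg' (hg0 _))]
    rw [intG, if_neg hcond, hPhi, EReal.coe_ennreal_top]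

lemma ereal_mul_eq_top_iff {a : ℝ} (ha : 0 < a) (X : EReal) :
    (a : EReal) * X = ⊤ ↔ X = ⊤ := by
  induction X using EReal.rec with
  | bot => simp [EReal.coe_mul_bot_of_pos ha]
  | coe r => simp [← EReal.coe_mul]
  | top => simp [EReal.coe_mul_top_of_pos ha]

lemma intG_smul {a : ℝ} (ha : 0 < a) {g : Vec k → EReal} (u : α → Vec k) :
    intG μ (fun v => (a : EReal) * g v) u = (a : EReal) * intG μ g u := by
  have htr : ∀ x, ((a : EReal) * g (u x)).toReal = a * (g (u x)).toReal := fun x => by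
    rw [EReal.toReal_mul, EReal.toReal_coe]
  have hcond_iff : ((∀ᵐ x ∂μ, (a : EReal) * g (u x) ≠ ⊤) ∧
      Integrable (fun x => ((a : EReal) * g (u x)).toReal) μ) ↔
      ((∀ᵐ x ∂μ, g (u x) ≠ ⊤) ∧ Integrable (fun x => (g (u x)).toReal) μ) := by
    constructor
    · rintro ⟨h1, h2⟩
      refine ⟨h1.mono fun x hx h => hx (by rw [h, EReal.coe_mul_top_of_pos ha]), ?_⟩
      have := h2.const_mul a⁻¹
      refine this.congr (Eventually.of_forall fun x => ?_)
      show a⁻¹ * _ = _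
      rw [htr x]
      field_simp
    · rintro ⟨h1, h2⟩
      refine ⟨h1.mono fun x hx h => hx ((ereal_mul_eq_top_iff ha _).mp h), ?_⟩
      have := h2.const_mul a
      exact this.congr (Eventually.of_forall fun x => (htr x).symm)
  by_cases hcond : (∀ᵐ x ∂μ, g (u x) ≠ ⊤) ∧ Integrable (fun x => (g (u x)).toReal) μ
  · rw [intG, if_pos (hcond_iff.mpr hcond), intG, if_pos hcond]
    rw [show (∫ x, ((a:EReal) * g (u x)).toReal ∂μ) = ∫ x, a * (g (u x)).toReal ∂μ from
      integral_congr_ae (Eventually.of_forall htr), integral_const_mul, EReal.coe_mul]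
  · rw [intG, if_neg (fun h => hcond (hcond_iff.mp h)), intG, if_neg hcond,
      EReal.coe_mul_top_of_pos ha]

lemma phi_combo {g : Vec k → EReal} (hg0 : ∀ v, 0 ≤ g v) (hgm : Measurable g)
    (hconv : ∀ x y : Vec k, ∀ a b : ℝ, 0 ≤ a → 0 ≤ b → a + b = 1 →
      g (a • x + b • y) ≤ (a : EReal) * g x + (b : EReal) * g y)
    {u w : α → Vec k} (hu : AEMeasurable u μ) {a b : ℝ} (ha : 0 ≤ a) (hb : 0 ≤ b)
    (hab : a + b = 1) :
    (∫⁻ x, eNN (g (a • u x + b • w x)) ∂μ) ≤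
      ENNReal.ofReal a * Phi μ g u + ENNReal.ofReal b * Phi μ g w := by
  calc (∫⁻ x, eNN (g (a • u x + b • w x)) ∂μ)
      ≤ ∫⁻ x, (ENNReal.ofReal a * eNN (g (u x)) + ENNReal.ofReal b * eNN (g (w x))) ∂μ :=
        lintegral_mono fun x => le_trans (eNN_mono (hconv _ _ _ _ ha hb hab))
          (eNN_combo (hg0 _) (hg0 _) ha hb hab)
    _ = (∫⁻ x, ENNReal.ofReal a * eNN (g (u x)) ∂μ) +
          ∫⁻ x, ENNReal.ofReal b * eNN (g (w x)) ∂μ := by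
        have h : AEMeasurable (fun x => ENNReal.ofReal a * eNN (g (u x))) μ :=
          AEMeasurable.const_mul ((measurable_eNN.comp hgm).comp_aemeasurable hu) _
        exact lintegral_add_left' h _
    _ = ENNReal.ofReal a * Phi μ g u + ENNReal.ofReal b * Phi μ g w := by
        rw [Phi, Phi, lintegral_const_mul' _ _ ENNReal.ofReal_ne_top,
          lintegral_const_mul' _ _ ENNReal.ofReal_ne_top]

lemma phi_lsc_seq {g : Vec k → EReal} (hglsc : LowerSemicontinuous g)
    (v : ℕ → Lp (Vec k) 2 μ) (l : Lp (Vec k) 2 μ) (hv : Tendsto v atTop (𝓝 l)) :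
    Phi μ g (fun x => l x) ≤ atTop.liminf fun j => Phi μ g (fun x => v j x) := by
  have hgm : Measurable g := hglsc.measurable
  by_contra hlt
  push_neg at hlt
  obtain ⟨r, hr1, hr2⟩ := exists_between hlt
  obtain ⟨φ, hφmono, hφ⟩ := Filter.extraction_of_frequently_atTop
    (frequently_lt_of_liminf_lt (by isBoundedDefault) hr1)
  have htend : Tendsto (fun j => v (φ j)) atTop (𝓝 l) := hv.comp hφmono.tendsto_atTop
  have hmeas : TendstoInMeasure μ (fun j x => v (φ j) x) atTop (fun x => l x) :=
    tendstoInMeasure_of_tendsto_Lp htend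
  obtain ⟨ns, hns, hae⟩ := hmeas.exists_seq_tendsto_ae
  have key : Phi μ g (fun x => l x) ≤ atTop.liminf fun j => Phi μ g (fun x => v (φ (ns j)) x) := by
    refine le_trans ?_ (lintegral_liminf_le' fun j =>
      (measurable_eNN.comp hgm).comp_aemeasurable (Lp.aestronglyMeasurable _).aemeasurable)
    refine lintegral_mono_ae ?_
    filter_upwards [hae] with x hx
    exact eNN_le_liminf hglsc hx
  have hle : Phi μ g (fun x => l x) ≤ r := by
    refine key.trans (le_trans (liminf_le_liminf (Eventually.of_forall fun j =>
      (hφ (ns j)).le)) ?_)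
    simp [liminf_const]
  exact absurd hle (not_le.mpr hr2)

lemma mem_of_weakTendsto {X : Type*} [NormedAddCommGroup X] [InnerProductSpace ℝ X]
    [CompleteSpace X] {C : Set X} (hconv : Convex ℝ C) (hcl : IsClosed C)
    {u : ℕ → X} (hu : ∀ j, u j ∈ C) {l : X} (hw : WeakTendsto u l) : l ∈ C := by
  obtain ⟨p, hpC, hp⟩ := exists_norm_eq_iInf_of_complete_convex ⟨u 0, hu 0⟩
    hcl.isComplete hconv l
  have hchar := (norm_eq_iInf_iff_real_inner_le_zero hconv hpC).mp hp
  have h2 : Tendsto (fun j => (inner ℝ (u j - p) (l - p) : ℝ)) atTop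
      (𝓝 (inner ℝ (l - p) (l - p) : ℝ)) := by
    have h1 := (hw (l - p)).sub (tendsto_const_nhds (x := (inner ℝ p (l - p) : ℝ)))
    simpa only [inner_sub_left] using h1
  have h3 : (inner ℝ (l - p) (l - p) : ℝ) ≤ 0 := by
    refine le_of_tendsto h2 (Eventually.of_forall fun j => ?_)
    have := hchar (u j) (hu j)
    rwa [real_inner_comm]
  have h4 : l - p = 0 := by
    have := real_inner_self_nonpos.mp h3
    exact this
  have : l = p := by rwa [sub_eq_zero] at h4
  rw [this]; exact hpC

set_option synthInstance.maxHeartbeats 1000000 in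
lemma phi_weak_lsc {g : Vec k → EReal} (hg0 : ∀ v, 0 ≤ g v)
    (hglsc : LowerSemicontinuous g)
    (hconv : ∀ x y : Vec k, ∀ a b : ℝ, 0 ≤ a → 0 ≤ b → a + b = 1 →
      g (a • x + b • y) ≤ (a : EReal) * g x + (b : EReal) * g y)
    (u : ℕ → Lp (Vec k) 2 μ) (l : Lp (Vec k) 2 μ) (hw : WeakTendsto u l) :
    Phi μ g (fun x => l x) ≤ atTop.liminf fun i => Phi μ g (fun x => u i x) := by
  by_contra h
  push_neg at h
  obtain ⟨r, hr1, hr2⟩ := exists_between h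
  obtain ⟨φ, hφmono, hφ⟩ := Filter.extraction_of_frequently_atTop
    (frequently_lt_of_liminf_lt (by isBoundedDefault) hr1)
  set C : Set (Lp (Vec k) 2 μ) := {v | Phi μ g (fun x => v x) ≤ r} with hC
  have hCconv : Convex ℝ C := by
    rintro x hx y hy a b ha hb hab
    have hae : (fun ξ => (a • x + b • y : Lp (Vec k) 2 μ) ξ) =ᵐ[μ]
        fun ξ => a • (x ξ) + b • (y ξ) := by
      filter_upwards [Lp.coeFn_add (a • x) (b • y), Lp.coeFn_smul a x, Lp.coeFn_smul b y]
        with ξ h1 h2 h3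
      rw [h1, Pi.add_apply, h2, h3]
      rfl
    have hkey : Phi μ g (fun ξ => (a • x + b • y : Lp (Vec k) 2 μ) ξ) =
        ∫⁻ ξ, eNN (g (a • (x ξ) + b • (y ξ))) ∂μ :=
      lintegral_congr_ae (hae.mono fun ξ hξ => by
        simpa using congrArg (fun z => eNN (g z)) hξ)
    have : Phi μ g (fun ξ => (a • x + b • y : Lp (Vec k) 2 μ) ξ) ≤
        ENNReal.ofReal a * r + ENNReal.ofReal b * r := by
      rw [hkey]
      refine le_trans (phi_combo hg0 hglsc.measurable hconv
        (Lp.aestronglyMeasurable x).aemeasurable ha hb hab) ?_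
      exact add_le_add (mul_le_mul_right hx _) (mul_le_mul_right hy _)
    refine le_trans this (le_of_eq ?_)
    rw [← add_mul, ← ENNReal.ofReal_add ha hb, hab, ENNReal.ofReal_one, one_mul]
  have hCcl : IsClosed C := by
    refine IsSeqClosed.isClosed ?_
    intro v lv hvC hlv
    refine le_trans (phi_lsc_seq hglsc v lv hlv) ?_
    refine le_trans (liminf_le_liminf (Eventually.of_forall fun j => hvC j)) ?_
    simp [liminf_const]
  have hmem : l ∈ C := by
    refine mem_of_weakTendsto hCconv hCcl (fun j => (hφ j).le) ?_
    intro w2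
    exact (hw w2).comp hφmono.tendsto_atTop
  exact absurd hmem (not_le.mpr hr2)

end MeasureLayer

section ConjLayer

variable {X : Type*} [NormedAddCommGroup X] [InnerProductSpace ℝ X]

lemma ereal_cases (x : EReal) : x = ⊥ ∨ (∃ r : ℝ, x = (r : EReal)) ∨ x = ⊤ := by
  induction x using EReal.rec with
  | bot => exact Or.inl rfl
  | coe r => exact Or.inr (Or.inl ⟨r, rfl⟩)
  | top => exact Or.inr (Or.inr rfl)

lemma le_econj (f : X → EReal) (p v : X) :
    ((inner ℝ p v : ℝ) : EReal) - f v ≤ EConj f p := by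
  rw [EConj]
  exact le_iSup (fun v => ((inner ℝ p v : ℝ) : EReal) - f v) v

lemma econj_lsc (f : X → EReal) : LowerSemicontinuous (EConj f) := by
  rw [lowerSemicontinuous_iff_isOpen_preimage]
  intro y
  have hrw : (EConj f) ⁻¹' Ioi y = ⋃ v, {p : X | y < ((inner ℝ p v : ℝ) : EReal) - f v} := by
    ext p
    simp [EConj, lt_iSup_iff]
  rw [hrw]
  refine isOpen_iUnion fun v => ?_
  rcases ereal_cases (f v) with hfv | ⟨r, hfv⟩ | hfv
  · have h1 : {p : X | y < ((inner ℝ p v : ℝ) : EReal) - f v} = {p : X | y < ⊤} := by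
      ext p
      simp only [mem_setOf_eq]
      rw [hfv, EReal.sub_bot (EReal.coe_ne_bot _)]
    rw [h1]
    by_cases hy : y < ⊤
    · have : {p : X | y < ⊤} = univ := by ext p; simpa using hy
      rw [this]; exact isOpen_univ
    · have : {p : X | y < ⊤} = ∅ := by ext p; simpa using hy
      rw [this]; exact isOpen_empty
  · have h1 : {p : X | y < ((inner ℝ p v : ℝ) : EReal) - f v} =
        (fun p : X => ((inner ℝ p v - r : ℝ) : EReal)) ⁻¹' Ioi y := by
      ext p
      simp only [mem_setOf_eq, mem_preimage, mem_Ioi]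
      rw [hfv, EReal.coe_sub]
    rw [h1]
    exact (continuous_coe_real_ereal.comp
      ((continuous_id.inner continuous_const).sub continuous_const)).isOpen_preimage _ isOpen_Ioi
  · have h1 : {p : X | y < ((inner ℝ p v : ℝ) : EReal) - f v} = ∅ := by
      ext p
      simp only [mem_setOf_eq, mem_empty_iff_false, iff_false, not_lt]
      rw [hfv, EReal.sub_top]
      exact bot_le
    rw [h1]; exact isOpen_empty

lemma econj_convex (f : X → EReal) (x y : X) (a b : ℝ) (ha : 0 ≤ a) (hb : 0 ≤ b)
    (hab : a + b = 1) :
    EConj f (a • x + b • y) ≤ (a : EReal) * EConj f x + (b : EReal) * EConj f y := by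
  rw [EConj]
  refine iSup_le fun v => ?_
  rcases ereal_cases (f v) with hfv | ⟨r, hfv⟩ | hfv
  · have hx : EConj f x = ⊤ := by
      refine top_le_iff.mp ?_
      calc (⊤ : EReal) = ((inner ℝ x v : ℝ) : EReal) - ⊥ := (EReal.sub_bot (EReal.coe_ne_bot _)).symm
      _ = ((inner ℝ x v : ℝ) : EReal) - f v := by rw [hfv]
      _ ≤ EConj f x := le_econj f x v
    have hy : EConj f y = ⊤ := by
      refine top_le_iff.mp ?_
      calc (⊤ : EReal) = ((inner ℝ y v : ℝ) : EReal) - ⊥ := (EReal.sub_bot (EReal.coe_ne_bot _)).symm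
      _ = ((inner ℝ y v : ℝ) : EReal) - f v := by rw [hfv]
      _ ≤ EConj f y := le_econj f y v
    rw [hx, hy]
    rcases ha.eq_or_lt with rfl | ha'
    · have hb1 : b = 1 := by linarith
      subst hb1
      simp
    · rw [EReal.coe_mul_top_of_pos ha', EReal.top_add_of_ne_bot]
      · exact le_top
      · rcases hb.eq_or_lt with rfl | hb'
        · simp
        · rw [EReal.coe_mul_top_of_pos hb']; exact top_ne_bot
  · have key : ((inner ℝ (a • x + b • y) v : ℝ) : EReal) - f v =
        (a : EReal) * (((inner ℝ x v : ℝ) : EReal) - f v) +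
          (b : EReal) * (((inner ℝ y v : ℝ) : EReal) - f v) := by
      rw [hfv, ← EReal.coe_sub, ← EReal.coe_sub, ← EReal.coe_sub, ← EReal.coe_mul,
        ← EReal.coe_mul, ← EReal.coe_add, EReal.coe_eq_coe_iff]
      rw [inner_add_left, real_inner_smul_left, real_inner_smul_left]
      linear_combination r * hab
    rw [key]
    exact add_le_add
      (mul_le_mul_of_nonneg_left (le_econj f x v) (by exact_mod_cast ha))
      (mul_le_mul_of_nonneg_left (le_econj f y v) (by exact_mod_cast hb))
  · rw [hfv, EReal.sub_top]
    exact bot_le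

lemma ereal_mul_add (a : ℝ) (ha : 0 < a) (x y : EReal) :
    (a : EReal) * (x + y) = (a : EReal) * x + (a : EReal) * y := by
  rcases ereal_cases x with rfl | ⟨r, rfl⟩ | rfl <;>
    rcases ereal_cases y with rfl | ⟨q, rfl⟩ | rfl <;>
    simp_all [EReal.coe_mul_top_of_pos ha, EReal.coe_mul_bot_of_pos ha, ← EReal.coe_mul,
      ← EReal.coe_add, mul_add]

lemma ereal_mul_neg' (a : ℝ) (ha : 0 < a) (y : EReal) :
    (a : EReal) * (-y) = -((a : EReal) * y) := by
  rcases ereal_cases y with rfl | ⟨q, rfl⟩ | rfl <;>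
    simp_all [EReal.coe_mul_top_of_pos ha, EReal.coe_mul_bot_of_pos ha, ← EReal.coe_mul,
      ← EReal.coe_neg]

lemma ereal_mul_sub (a : ℝ) (ha : 0 < a) (x y : EReal) :
    (a : EReal) * (x - y) = (a : EReal) * x - (a : EReal) * y := by
  rw [sub_eq_add_neg, sub_eq_add_neg, ereal_mul_add a ha, ereal_mul_neg' a ha]

lemma ereal_mul_cancel (a : ℝ) (ha : 0 < a) (x : EReal) :
    (a⁻¹ : ℝ) * ((a : EReal) * x) = x := by
  rw [← mul_assoc, ← EReal.coe_mul, inv_mul_cancel₀ ha.ne', EReal.coe_one, one_mul]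

lemma ereal_mul_iSup {ι : Sort*} (a : ℝ) (ha : 0 < a) (h : ι → EReal) :
    (a : EReal) * (⨆ i, h i) = ⨆ i, (a : EReal) * h i := by
  refine le_antisymm ?_ (iSup_le fun i =>
    mul_le_mul_of_nonneg_left (le_iSup h i) (by exact_mod_cast ha.le))
  have key : (⨆ i, h i) ≤ (a⁻¹ : ℝ) * ⨆ i, (a : EReal) * h i := by
    refine iSup_le fun i => ?_
    rw [← ereal_mul_cancel a ha (h i)]
    exact mul_le_mul_of_nonneg_left (le_iSup (fun i => (a : EReal) * h i) i)
      (by exact_mod_cast (inv_pos.mpr ha).le)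
  calc (a : EReal) * (⨆ i, h i) ≤ (a : EReal) * ((a⁻¹ : ℝ) * ⨆ i, (a : EReal) * h i) :=
        mul_le_mul_of_nonneg_left key (by exact_mod_cast ha.le)
  _ = ⨆ i, (a : EReal) * h i := by
      rw [← mul_assoc, ← EReal.coe_mul, mul_inv_cancel₀ ha.ne', EReal.coe_one, one_mul]

lemma econj_smul {a : ℝ} (ha : 0 < a) (f : X → EReal) (p : X) :
    EConj (fun v => (a : EReal) * f v) p = (a : EReal) * EConj f (a⁻¹ • p) := by
  rw [EConj, EConj, ereal_mul_iSup a ha]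
  congr 1
  funext v
  rw [ereal_mul_sub a ha]
  congr 1
  rw [← EReal.coe_mul, real_inner_smul_left]
  congr 1
  field_simp

lemma biconj_smul {a : ℝ} (ha : 0 < a) (f : X → EReal) (w : X) :
    EConj (EConj (fun v => (a : EReal) * f v)) w = (a : EReal) * EConj (EConj f) w := by
  have h1 : ∀ p : X, ((inner ℝ w p : ℝ) : EReal) - EConj (fun v => (a : EReal) * f v) p =
      (a : EReal) * (((inner ℝ w (a⁻¹ • p) : ℝ) : EReal) - EConj f (a⁻¹ • p)) := by
    intro p
    rw [econj_smul ha, ereal_mul_sub a ha]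
    congr 1
    rw [← EReal.coe_mul, real_inner_smul_right]
    congr 1
    field_simp
  rw [EConj]
  refine le_antisymm (iSup_le fun p => ?_) ?_
  · rw [h1 p]
    exact mul_le_mul_of_nonneg_left (le_econj (EConj f) w _) (by exact_mod_cast ha.le)
  · rw [EConj, ereal_mul_iSup a ha]
    refine iSup_le fun q => ?_
    have h2 : (a : EReal) * (((inner ℝ w q : ℝ) : EReal) - EConj f q) =
        ((inner ℝ w (a • q) : ℝ) : EReal) - EConj (fun v => (a : EReal) * f v) (a • q) := by
      rw [h1 (a • q), inv_smul_smul₀ ha.ne']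
    rw [h2]
    exact le_iSup (fun p => ((inner ℝ w p : ℝ) : EReal) -
      EConj (fun v => (a : EReal) * f v) p) (a • q)

lemma biconj_nonneg {f : X → EReal} (hf0 : ∀ v, 0 ≤ f v) {v₀ : X} (hv₀ : f v₀ ≠ ⊤) (w : X) :
    0 ≤ EConj (EConj f) w := by
  have h0 : EConj f 0 ≤ 0 := by
    rw [EConj]
    refine iSup_le fun v => ?_
    have h00 : ((inner ℝ (0 : X) v : ℝ) : EReal) = (0 : EReal) := by
      rw [inner_zero_left]; rfl
    rw [h00]
    calc (0 : EReal) - f v ≤ 0 - 0 := EReal.sub_le_sub le_rfl (hf0 v)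
    _ = 0 := by simp
  have hbot : EConj f 0 ≠ ⊥ := by
    intro h
    have hle : ((inner ℝ (0:X) v₀ : ℝ) : EReal) - f v₀ ≤ EConj f 0 := le_econj f 0 v₀
    rw [h, le_bot_iff] at hle
    have hfb : f v₀ ≠ ⊥ := fun hb => by
      have := hf0 v₀
      rw [hb] at this
      exact absurd this (by simp)
    have hrw : ((inner ℝ (0:X) v₀ : ℝ) : EReal) - f v₀ =
        ((inner ℝ (0:X) v₀ - (f v₀).toReal : ℝ) : EReal) := by
      rw [EReal.coe_sub]
      congr 1
      exact (EReal.coe_toReal hv₀ hfb).symm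
    rw [hrw] at hle
    exact EReal.coe_ne_bot _ hle
  calc (0 : EReal) ≤ 0 - EConj f 0 := by
        calc (0:EReal) = 0 - 0 := by simp
        _ ≤ 0 - EConj f 0 := EReal.sub_le_sub le_rfl h0
  _ = ((inner ℝ w (0:X) : ℝ) : EReal) - EConj f 0 := by rw [inner_zero_right]; rfl
  _ ≤ EConj (EConj f) w := le_econj (EConj f) w 0

end ConjLayer

lemma val_eq (a e mm : ℝ) (ha : 0 < a) (G : EReal) (hG0 : 0 ≤ G) :
    ((a⁻¹ : ℝ) : EReal) * ((e : EReal) + (a : EReal) * G - (mm : EReal)) =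
      if G = ⊤ then (⊤ : EReal) else ((a⁻¹ * (e - mm) + G.toReal : ℝ) : EReal) := by
  rcases eq_or_ne G ⊤ with rfl | h
  · rw [if_pos rfl, EReal.coe_mul_top_of_pos ha, EReal.add_top_of_ne_bot (EReal.coe_ne_bot _)]
    rw [EReal.top_sub_coe, EReal.coe_mul_top_of_pos (inv_pos.mpr ha)]
  · have hb : G ≠ ⊥ := fun hbb => by
      rw [hbb] at hG0
      exact absurd hG0 (by simp)
    rw [if_neg h, ← EReal.coe_toReal h hb, ← EReal.coe_mul, ← EReal.coe_add, ← EReal.coe_sub,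
      ← EReal.coe_mul, EReal.coe_eq_coe_iff]
    simp only [EReal.toReal_coe]
    field_simp
    ring

end GammaAux

open GammaAux

set_option maxHeartbeats 2000000

open Classical in
/-- Γ-convergence for vanishing control cost `α → 0`: with
`g_α = (α c + δ_M)**`, `M₀ = inf_u ‖S u − z‖` and `O = {u : ‖S u − z‖ = M₀}`, if `S` is
weak-to-weak continuous then `(1/α)(E^z_α − M₀²/2)` Γ-converges, w.r.t. weak convergence
in `U`, to `δ_O + G₁` with `G₁(u) = ∫_Ω (c + δ_M)**(u(x)) dx`. -/
theorem gamma_convergence_vanishing_alpha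
    {n m : ℕ} (hm : 2 ≤ m)
    (Ω : Set (Vec n)) (hΩopen : IsOpen Ω) (hΩbdd : Bornology.IsBounded Ω)
    {Y : Type*} [NormedAddCommGroup Y] [InnerProductSpace ℝ Y] [CompleteSpace Y] (z : Y)
    (M : Finset (Vec m)) (hM : M.Nonempty)
    (c : Vec m → ℝ) (hc0 : ∀ v, 0 ≤ c v) (hcconv : StrictConvexOn ℝ Set.univ c)
    (hclsc : LowerSemicontinuous c)
    (S : Lp (Vec m) 2 (volume.restrict Ω) → Y)
    (hS : ∀ (u : ℕ → Lp (Vec m) 2 (volume.restrict Ω)) (l : Lp (Vec m) 2 (volume.restrict Ω)),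
      WeakTendsto u l → WeakTendsto (fun i => S (u i)) (S l))
    -- the `α`-dependent multibang penalty `g_α = (α c + δ_M)**`
    (gα : ℝ → Vec m → EReal)
    (hgα : ∀ a : ℝ, gα a = EConj (EConj (fun v =>
      if v ∈ (M : Set (Vec m)) then ((a * c v : ℝ) : EReal) else ⊤)))
    -- the best approximation distance and set
    (M0 : ℝ) (hM0 : M0 = ⨅ u : Lp (Vec m) 2 (volume.restrict Ω), ‖S u - z‖)
    -- the Γ-limit functional `δ_O + G₁` with `g₁ = (c + δ_M)**`
    (Flim : Lp (Vec m) 2 (volume.restrict Ω) → EReal)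
    (hFlim : ∀ u, Flim u =
      (if ‖S u - z‖ = M0 then (0 : EReal) else ⊤) +
        intG (volume.restrict Ω) (EConj (EConj (fun v =>
          if v ∈ (M : Set (Vec m)) then ((c v : ℝ) : EReal) else ⊤))) (fun x => u x))
    -- a sequence of control cost parameters tending to zero
    (αs : ℕ → ℝ) (hαpos : ∀ i, 0 < αs i) (hαs : Tendsto αs atTop (nhds (0:ℝ))) :
    -- (i) Γ-liminf inequality
    (∀ (u : ℕ → Lp (Vec m) 2 (volume.restrict Ω)) (l), WeakTendsto u l →
      Flim l ≤ Filter.liminf (fun i => (((αs i)⁻¹ : ℝ) : EReal) *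
        (energy (volume.restrict Ω) S z (gα (αs i)) (u i) - (((M0^2/2 : ℝ)) : EReal))) atTop)
    -- (ii) existence of recovery sequences
    ∧ (∀ l : Lp (Vec m) 2 (volume.restrict Ω), ∃ u : ℕ → Lp (Vec m) 2 (volume.restrict Ω),
        WeakTendsto u l ∧
        Filter.limsup (fun i => (((αs i)⁻¹ : ℝ) : EReal) *
          (energy (volume.restrict Ω) S z (gα (αs i)) (u i) - (((M0^2/2 : ℝ)) : EReal))) atTop
          ≤ Flim l) := by
  classical
  set f₁ : Vec m → EReal :=
    fun v => if v ∈ (M : Set (Vec m)) then ((c v : ℝ) : EReal) else ⊤ with hf₁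
  set g : Vec m → EReal := EConj (EConj f₁) with hg
  obtain ⟨v₀, hv₀M⟩ := hM
  have hf₁0 : ∀ v, 0 ≤ f₁ v := fun v => by
    rw [hf₁]
    dsimp only
    split
    · exact_mod_cast hc0 v
    · exact le_top
  have hv₀ : f₁ v₀ ≠ ⊤ := by
    rw [hf₁]
    simp only [Finset.coe_sort_coe, Finset.mem_coe, hv₀M, if_pos]
    exact EReal.coe_ne_top _
  have hg0 : ∀ v, 0 ≤ g v := GammaAux.biconj_nonneg hf₁0 hv₀
  have hglsc : LowerSemicontinuous g := GammaAux.econj_lsc (EConj f₁)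
  have hgconv : ∀ x y : Vec m, ∀ a b : ℝ, 0 ≤ a → 0 ≤ b → a + b = 1 →
      g (a • x + b • y) ≤ (a : EReal) * g x + (b : EReal) * g y :=
    fun x y a b ha hb hab => GammaAux.econj_convex (EConj f₁) x y a b ha hb hab
  have hgm : Measurable g := hglsc.measurable
  have hgα' : ∀ i v, gα (αs i) v = ((αs i : ℝ) : EReal) * g v := by
    intro i v
    have hfa : (fun v => if v ∈ (M : Set (Vec m)) then ((αs i * c v : ℝ) : EReal) else ⊤) =
        fun v => ((αs i : ℝ) : EReal) * f₁ v := by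
      funext v'
      rw [hf₁]
      dsimp only
      split
      · rw [EReal.coe_mul]
      · rw [EReal.coe_mul_top_of_pos (by exact_mod_cast hαpos i)]
    rw [hgα (αs i), hfa]
    exact GammaAux.biconj_smul (hαpos i) f₁ v
  have hintG : ∀ (i : ℕ) (uu : Lp (Vec m) 2 (volume.restrict Ω)),
      intG (volume.restrict Ω) (gα (αs i)) (fun x => uu x) = ((αs i : ℝ) : EReal) * intG (volume.restrict Ω) g (fun x => uu x) := by
    intro i uu
    rw [show gα (αs i) = fun v => ((αs i : ℝ) : EReal) * g v from funext (hgα' i)]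
    exact GammaAux.intG_smul (hαpos i) _
  haveI : Nonempty (Lp (Vec m) 2 (volume.restrict Ω)) := ⟨0⟩
  have hM0le : ∀ v : Lp (Vec m) 2 (volume.restrict Ω), M0 ≤ ‖S v - z‖ := fun v => by
    rw [hM0]
    exact ciInf_le ⟨0, by rintro _ ⟨u', rfl⟩; exact norm_nonneg _⟩ v
  have hM0nn : 0 ≤ M0 := by
    rw [hM0]
    exact le_ciInf fun v => norm_nonneg _
  -- canonical form of the rescaled functionals
  have hT : ∀ (uu : Lp (Vec m) 2 (volume.restrict Ω)) (i : ℕ),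
      (((αs i)⁻¹ : ℝ) : EReal) *
        (energy (volume.restrict Ω) S z (gα (αs i)) uu - ((M0^2/2 : ℝ) : EReal)) =
      if intG (volume.restrict Ω) g (fun x => uu x) = ⊤ then (⊤ : EReal)
      else (((αs i)⁻¹ * ((1/2 : ℝ) * ‖S uu - z‖^2 - M0^2/2) +
        (intG (volume.restrict Ω) g (fun x => uu x)).toReal : ℝ) : EReal) := by
    intro uu i
    rw [energy, hintG i uu]
    exact GammaAux.val_eq (αs i) _ _ (hαpos i) _ (GammaAux.intG_nonneg hg0 _)
  constructor
  · -- Γ-liminf inequality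
    intro u l hw
    have hDnn : ∀ i, 0 ≤ (1/2 : ℝ) * ‖S (u i) - z‖^2 - M0^2/2 := fun i => by
      have h1 := hM0le (u i)
      nlinarith [norm_nonneg (S (u i) - z)]
    have hTbound : ∀ i, intG (volume.restrict Ω) g (fun x => u i x) ≤
        (((αs i)⁻¹ : ℝ) : EReal) *
          (energy (volume.restrict Ω) S z (gα (αs i)) (u i) - ((M0^2/2 : ℝ) : EReal)) := by
      intro i
      rw [hT (u i) i]
      split_ifs with hGi
      · exact le_top
      · conv_lhs => rw [← EReal.coe_toReal hGi (GammaAux.intG_ne_bot g _)]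
        refine EReal.coe_le_coe_iff.mpr ?_
        have h2 : 0 ≤ ((αs i)⁻¹ : ℝ) * ((1/2 : ℝ) * ‖S (u i) - z‖^2 - M0^2/2) :=
          mul_nonneg (inv_nonneg.mpr (hαpos i).le) (hDnn i)
        linarith
    rw [hFlim l]
    by_cases hnorm : ‖S l - z‖ = M0
    · rw [if_pos hnorm, zero_add]
      have hcoe : ∀ uu : Lp (Vec m) 2 (volume.restrict Ω), intG (volume.restrict Ω) g (fun x => uu x) =
          ((Phi (volume.restrict Ω) g (fun x => uu x) : ℝ≥0∞) : EReal) := fun uu =>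
        GammaAux.intG_eq_phi hg0 hgm (Lp.aestronglyMeasurable uu).aemeasurable
      calc intG (volume.restrict Ω) g (fun x => l x)
          = ((Phi (volume.restrict Ω) g (fun x => l x) : ℝ≥0∞) : EReal) := hcoe l
        _ ≤ ((atTop.liminf (fun i => Phi (volume.restrict Ω) g (fun x => u i x)) : ℝ≥0∞) : EReal) :=
            EReal.coe_ennreal_le_coe_ennreal_iff.mpr
              (GammaAux.phi_weak_lsc hg0 hglsc hgconv u l hw)
        _ = atTop.liminf (fun i => ((Phi (volume.restrict Ω) g (fun x => u i x) : ℝ≥0∞) : EReal)) :=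
            Monotone.map_liminf_of_continuousAt EReal.coe_ennreal_strictMono.monotone _
              continuous_coe_ennreal_ereal.continuousAt
        _ = atTop.liminf (fun i => intG (volume.restrict Ω) g (fun x => u i x)) := by
            refine liminf_congr (Eventually.of_forall fun i => ?_)
            rw [hcoe (u i)]
        _ ≤ _ := liminf_le_liminf (Eventually.of_forall hTbound)
    · rw [if_neg hnorm, EReal.top_add_of_ne_bot (GammaAux.intG_ne_bot g _)]
      have hgt : M0 < ‖S l - z‖ := lt_of_le_of_ne (hM0le l) (Ne.symm hnorm)
      have hwpos : (0:ℝ) < ‖S l - z‖ := lt_of_le_of_lt hM0nn hgt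
      set ww : Y := S l - z with hww
      set ρ : ℝ := (M0 + ‖ww‖)/2 with hρ
      have hρ1 : M0 < ρ := by rw [hρ]; linarith
      have hρ2 : ρ < ‖ww‖ := by rw [hρ]; linarith
      have hρnn : 0 ≤ ρ := by rw [hρ]; linarith
      set δ : ℝ := (1/2 : ℝ)*ρ^2 - M0^2/2 with hδ
      have hδpos : 0 < δ := by rw [hδ]; nlinarith
      have hSw : Tendsto (fun i => (inner ℝ (S (u i) - z) ww : ℝ)) atTop (𝓝 (‖ww‖^2)) := by
        have h1 := (hS u l hw) ww
        have h2 := h1.sub (tendsto_const_nhds (x := (inner ℝ z ww : ℝ)))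
        have h4 : ((inner ℝ (S l) ww : ℝ) - inner ℝ z ww) = ‖ww‖^2 := by
          rw [← inner_sub_left, hww]
          exact real_inner_self_eq_norm_sq _
        rw [h4] at h2
        refine h2.congr fun i => ?_
        rw [← inner_sub_left]
      have hev : ∀ᶠ i in atTop, ρ < ‖S (u i) - z‖ := by
        have hlt : ρ * ‖ww‖ < ‖ww‖^2 := by nlinarith
        filter_upwards [hSw.eventually (eventually_gt_nhds hlt)] with i hi
        have hcs := real_inner_le_norm (S (u i) - z) ww
        by_contra hcon
        push_neg at hcon
        nlinarith [norm_nonneg ww]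
      have hinv : Tendsto (fun i => (αs i)⁻¹ * δ) atTop atTop := by
        have h0 : Tendsto αs atTop (𝓝[>] (0:ℝ)) :=
          tendsto_nhdsWithin_iff.mpr ⟨hαs, Eventually.of_forall fun i => hαpos i⟩
        exact (tendsto_inv_nhdsGT_zero.comp h0).atTop_mul_const hδpos
      refine top_le_iff.mp (le_liminf_iff (by isBoundedDefault) (by isBoundedDefault)
        |>.mpr fun y hy => ?_) |>.ge
      rcases GammaAux.ereal_cases y with rfl | ⟨K, rfl⟩ | rfl
      · refine Eventually.of_forall fun i => ?_
        rw [hT (u i) i]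
        split_ifs with hGi
        · exact bot_lt_top
        · exact EReal.bot_lt_coe _
      · filter_upwards [hev, hinv.eventually (eventually_gt_atTop K)] with i h1 h2
        rw [hT (u i) i]
        split_ifs with hGi
        · exact EReal.coe_lt_top K
        · refine EReal.coe_lt_coe_iff.mpr ?_
          have ht : 0 ≤ (intG (volume.restrict Ω) g (fun x => u i x)).toReal :=
            GammaAux.toReal_nonneg' (GammaAux.intG_nonneg hg0 _)
          have hD : δ ≤ (1/2 : ℝ) * ‖S (u i) - z‖^2 - M0^2/2 := by nlinarith
          have hmul : (αs i)⁻¹ * δ ≤ (αs i)⁻¹ * ((1/2:ℝ) * ‖S (u i) - z‖^2 - M0^2/2) :=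
            mul_le_mul_of_nonneg_left hD (inv_nonneg.mpr (hαpos i).le)
          linarith
      · exact absurd hy (lt_irrefl _)
  · -- recovery sequences
    intro l
    refine ⟨fun _ => l, fun w2 => tendsto_const_nhds, ?_⟩
    by_cases htop : Flim l = ⊤
    · rw [htop]; exact le_top
    · have hnorm : ‖S l - z‖ = M0 := by
        by_contra hn
        exact htop (by rw [hFlim l, if_neg hn,
          EReal.top_add_of_ne_bot (GammaAux.intG_ne_bot _ _)])
      have hFl : Flim l = intG (volume.restrict Ω) g (fun x => l x) := by
        rw [hFlim l, if_pos hnorm, zero_add]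
      have hGne : intG (volume.restrict Ω) g (fun x => l x) ≠ ⊤ := fun h => htop (hFl.trans h)
      have hTconst : ∀ i : ℕ,
          (((αs i)⁻¹ : ℝ) : EReal) *
            (energy (volume.restrict Ω) S z (gα (αs i)) l - ((M0^2/2 : ℝ) : EReal)) = Flim l := by
        intro i
        rw [hT l i, if_neg hGne, hFl]
        rw [hnorm]
        rw [show (1/2 : ℝ) * M0^2 - M0^2/2 = 0 by ring, mul_zero, zero_add]
        exact EReal.coe_toReal hGne (GammaAux.intG_ne_bot g _)
      calc atTop.limsup (fun i => (((αs i)⁻¹ : ℝ) : EReal) *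
            (energy (volume.restrict Ω) S z (gα (αs i)) l - ((M0^2/2 : ℝ) : EReal)))
          = atTop.limsup (fun _ : ℕ => Flim l) := by
            refine limsup_congr (Eventually.of_forall fun i => ?_)
            rw [hTconst i]
        _ = Flim l := limsup_const _
        _ ≤ Flim l := le_rfl
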